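/- Let A be a unital C*-algebra and let a, b ∈ A. If the commutator c = ab − ba commutes with every element of A (i.e. c lies in the centre of A), then c = 0. -/

import Mathlib

open Filter Topology


/-- In a unital C*-algebra, a commutator ab − ba lying in the centre is zero. -/
theorem central_commutator_eq_zero {A : Type*} [NormedRing A] [StarRing A] [CStarRing A]
    [CompleteSpace A] [NormedAlgebra ℂ A] [StarModule ℂ A] (a b : A)
    (h : ∀ z : A, (a * b - b * a) * z = z * (a * b - b * a)) :
    a * b - b * a = 0 := by
  set c := a * b - b * a with hc
  set D : A → A := fun x => a * x - x * a with hD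
  have hDc : ∀ x : A, D (c * x) = c * D x := by
    intro x
    simp only [hD]
    have h1 : a * (c * x) = c * (a * x) := by rw [← mul_assoc, ← mul_assoc, ← h a]
    have h2 : (c * x) * a = c * (x * a) := by rw [mul_assoc]
    rw [h1, h2, mul_sub]
  have hA : ∀ n : ℕ, D (b ^ (n + 1)) = (n + 1) • (c * b ^ n) := by
    intro n
    induction n with
    | zero => simp [hD, hc]
    | succ n ih =>
      have key : D (b ^ (n + 2)) = D (b ^ (n + 1)) * b + b ^ (n + 1) * c := by
        simp only [hD, hc]
        rw [pow_succ]
        noncomm_ring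
      rw [key, ih, ← h (b ^ (n + 1)), smul_mul_assoc, mul_assoc, ← pow_succ,
        succ_nsmul (c * b ^ (n + 1)) (n + 1)]
  have hiter : ∀ (n : ℕ) (x : A), D^[n] (c * x) = c * D^[n] x := by
    intro n
    induction n with
    | zero => intro x; simp
    | succ n ih =>
      intro x
      rw [Function.iterate_succ_apply, hDc, ih]
      rfl
  have hsmul : ∀ (n k : ℕ) (x : A), D^[n] (k • x) = k • D^[n] x := by
    intro n
    induction n with
    | zero => intro k x; simp
    | succ n ih =>
      intro k x
      rw [Function.iterate_succ_apply, Function.iterate_succ_apply, ← ih]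
      congr 1
      simp only [hD, smul_sub, mul_smul_comm, smul_mul_assoc]
  have hB : ∀ n : ℕ, (n.factorial) • c ^ n = D^[n] (b ^ n) := by
    intro n
    induction n with
    | zero => simp
    | succ n ih =>
      rw [Function.iterate_succ_apply, hA n, hsmul, hiter, ← ih,
        Nat.factorial_succ, mul_smul, mul_smul_comm, ← pow_succ']
  have hDnorm : ∀ (n : ℕ) (x : A), ‖D^[n] x‖ ≤ (2 * ‖a‖) ^ n * ‖x‖ := by
    intro n
    induction n with
    | zero => intro x; simp
    | succ n ih =>
      intro x
      rw [Function.iterate_succ_apply']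
      calc ‖D (D^[n] x)‖ ≤ ‖a * D^[n] x‖ + ‖D^[n] x * a‖ := norm_sub_le _ _
        _ ≤ ‖a‖ * ‖D^[n] x‖ + ‖D^[n] x‖ * ‖a‖ := by
            gcongr <;> [exact norm_mul_le _ _; exact norm_mul_le _ _]
        _ = 2 * ‖a‖ * ‖D^[n] x‖ := by ring
        _ ≤ 2 * ‖a‖ * ((2 * ‖a‖) ^ n * ‖x‖) :=
            mul_le_mul_of_nonneg_left (ih x) (by positivity)
        _ = (2 * ‖a‖) ^ (n + 1) * ‖x‖ := by ring
  have hkey : ∀ n : ℕ, 0 < n → (n.factorial : ℝ) * ‖c ^ n‖ ≤ (2 * ‖a‖ * ‖b‖) ^ n := by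
    intro n hn
    have h0 := hDnorm n (b ^ n)
    rw [← hB n, ← Nat.cast_smul_eq_nsmul ℝ, norm_smul, Real.norm_natCast] at h0
    calc (n.factorial : ℝ) * ‖c ^ n‖ ≤ (2 * ‖a‖) ^ n * ‖b ^ n‖ := h0
      _ ≤ (2 * ‖a‖) ^ n * ‖b‖ ^ n :=
          mul_le_mul_of_nonneg_left (norm_pow_le' b hn) (by positivity)
      _ = (2 * ‖a‖ * ‖b‖) ^ n := (mul_pow _ _ _).symm
  have hspec : ∀ k ∈ spectrum ℂ c, k = 0 := by
    intro k hk
    by_contra hk0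
    set M : ℝ := 2 * ‖a‖ * ‖b‖ with hM
    have hkpos : (0:ℝ) < ‖k‖ := norm_pos_iff.mpr hk0
    have hbound : ∀ n : ℕ, 0 < n → (n.factorial : ℝ) ≤ (M / ‖k‖) ^ n * ‖(1:A)‖ := by
      intro n hn
      have hkn : k ^ n ∈ spectrum ℂ (c ^ n) := by
        have hsub := spectrum.subset_polynomial_aeval c (Polynomial.X ^ n : Polynomial ℂ)
        have hmem : k ^ n ∈ (fun x => (Polynomial.X ^ n : Polynomial ℂ).eval x) '' spectrum ℂ c :=
          ⟨k, hk, by simp⟩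
        simpa using hsub hmem
      have h1 : ‖k‖ ^ n ≤ ‖c ^ n‖ * ‖(1:A)‖ := by
        rw [← norm_pow]; exact spectrum.norm_le_norm_mul_of_mem hkn
      have h2 : (n.factorial : ℝ) * ‖k‖ ^ n ≤ M ^ n * ‖(1:A)‖ := by
        calc (n.factorial : ℝ) * ‖k‖ ^ n ≤ (n.factorial : ℝ) * (‖c ^ n‖ * ‖(1:A)‖) :=
              mul_le_mul_of_nonneg_left h1 (Nat.cast_nonneg _)
          _ = ((n.factorial : ℝ) * ‖c ^ n‖) * ‖(1:A)‖ := by ring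
          _ ≤ M ^ n * ‖(1:A)‖ :=
              mul_le_mul_of_nonneg_right (hkey n hn) (norm_nonneg _)
      rw [div_pow, div_mul_eq_mul_div, le_div_iff₀ (pow_pos hkpos n)]
      linarith [h2]
    have ht : Tendsto (fun n : ℕ => (M / ‖k‖) ^ n / (n.factorial : ℝ) * ‖(1:A)‖)
        atTop (𝓝 0) := by
      simpa using (FloorSemiring.tendsto_pow_div_factorial_atTop (M / ‖k‖)).mul_const ‖(1:A)‖
    have hev := (ht.eventually (eventually_lt_nhds one_pos)).and (eventually_gt_atTop 0)
    obtain ⟨n, hlt, hn⟩ := hev.exists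
    have hfac : (0:ℝ) < (n.factorial : ℝ) := by exact_mod_cast n.factorial_pos
    have := hbound n hn
    rw [div_mul_eq_mul_div, div_lt_one hfac] at hlt
    linarith
  letI : CStarAlgebra A := { }
  haveI hnormal : IsStarNormal c := ⟨(h (star c)).symm⟩
  have hr : spectralRadius ℂ c = ‖c‖₊ := IsStarNormal.spectralRadius_eq_nnnorm c
  have hr0 : spectralRadius ℂ c = 0 := by
    refine le_antisymm (iSup₂_le fun k hk => ?_) zero_le
    rw [hspec k hk]
    simp
  rw [hr0] at hr
  have : ‖c‖₊ = 0 := by exact_mod_cast hr.symm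
  rwa [nnnorm_eq_zero] at this
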